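/- Let z be a nonzero element of the free right-symmetric algebra A = RS⟨x_1,…,x_n⟩ over k. Then the subalgebra of A generated by z is isomorphic to the free right-symmetric algebra RS⟨x⟩ on one generator; equivalently, the unique algebra homomorphism RS⟨x⟩ → A sending x to z is injective. -/

import Mathlib

namespace RS

/-- The degree of a nonassociative word. -/
def deg {X : Type*} : FreeMagma X → ℕ
  | .of _ => 1
  | .mul u v => deg u + deg v

/-- The order on nonassociative words: `u < v` if `d u < d v`; words of equal degree 1 are
compared in `X`; words `u = u₁u₂`, `v = v₁v₂` of equal degree `≥ 2` are compared
lexicographically. -/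
def wlt {X : Type*} [LinearOrder X] : FreeMagma X → FreeMagma X → Prop
  | .of a, .of b => a < b
  | .of _, .mul _ _ => True
  | .mul _ _, .of _ => False
  | .mul u₁ u₂, .mul v₁ v₂ =>
      deg (FreeMagma.mul u₁ u₂) < deg (FreeMagma.mul v₁ v₂) ∨
        (deg (FreeMagma.mul u₁ u₂) = deg (FreeMagma.mul v₁ v₂) ∧
          (wlt u₁ v₁ ∨ (u₁ = v₁ ∧ wlt u₂ v₂)))

/-- `u ≤ v` on nonassociative words. -/
def wle {X : Type*} [LinearOrder X] (u v : FreeMagma X) : Prop := wlt u v ∨ u = v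

/-- A word is good if it contains no subword `(rs)t` with `s > t`. -/
def IsGood {X : Type*} [LinearOrder X] : FreeMagma X → Prop
  | .of _ => True
  | .mul (.of _) v => IsGood v
  | .mul (.mul u₁ u₂) v =>
      IsGood (FreeMagma.mul u₁ u₂) ∧ IsGood v ∧ ¬ wlt v u₂

/-- Evaluation of a nonassociative word at values `x` in a magma `A`. -/
def evalWord {X A : Type*} [Mul A] (x : X → A) : FreeMagma X → A
  | .of a => x a
  | .mul u v => evalWord x u * evalWord x v

/-- Data exhibiting a nonunital nonassociative `k`-algebra `A` as the free right-symmetric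
algebra `RS⟨x_1,…,x_n⟩`: `A` satisfies the right-symmetric identity and the images of the good
words form a `k`-linear basis (Segal's theorem). -/
structure FreeRSData (k : Type*) [Field k] (n : ℕ) (A : Type*)
    [NonUnitalNonAssocRing A] [Module k A] where
  rightSymm : ∀ a b c : A, (a * b) * c - a * (b * c) = (a * c) * b - a * (c * b)
  x : Fin n → A
  basis : Module.Basis {w : FreeMagma (Fin n) // IsGood w} k A
  basis_eq : ∀ w : {w : FreeMagma (Fin n) // IsGood w}, basis w = evalWord x w.1

/-- `w` is the leading word of `f`: it is a good word occurring in the representation of `f`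
in the basis of good words, and every other good word occurring there is smaller. -/
def IsLeadingWord {k : Type*} [Field k] {n : ℕ} {A : Type*} [NonUnitalNonAssocRing A]
    [Module k A] (D : FreeRSData k n A) (f : A) (w : FreeMagma (Fin n)) : Prop :=
  ∃ hw : IsGood w,
    (⟨w, hw⟩ : {u : FreeMagma (Fin n) // IsGood u}) ∈ (D.basis.repr f).support ∧
      ∀ u ∈ (D.basis.repr f).support, u.1 ≠ w → wlt u.1 w

/-- The left-normed word `x R_{w_1} ⋯ R_{w_m} = (…((x w_1) w_2) … w_m)`. -/
def leftNormed {X : Type*} (a : FreeMagma X) (l : List (FreeMagma X)) : FreeMagma X :=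
  l.foldl FreeMagma.mul a

/-- The degree of a word in the variable `a`. -/
def countVar {X : Type*} [DecidableEq X] (a : X) : FreeMagma X → ℕ
  | .of b => if b = a then 1 else 0
  | .mul u v => countVar a u + countVar a v

/-- The two-sided ideal of the nonunital nonassociative `k`-algebra `A` generated by `f`. -/
def idealGen (k : Type*) [Field k] {A : Type*} [NonUnitalNonAssocRing A] [Module k A]
    (f : A) : Submodule k A :=
  sInf {I : Submodule k A | f ∈ I ∧ ∀ a : A, ∀ y ∈ I, a * y ∈ I ∧ y * a ∈ I}

/-- A pair of (nonzero) elements `f, g` is reducible if there is a good word `s` in a single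
variable with `s(f̄) = ḡ` or `s(ḡ) = f̄`. -/
def Reducible {k : Type*} [Field k] {n : ℕ} {A : Type*} [NonUnitalNonAssocRing A]
    [Module k A] (D : FreeRSData k n A) (f g : A) : Prop :=
  ∃ wf wg : FreeMagma (Fin n), IsLeadingWord D f wf ∧ IsLeadingWord D g wg ∧
    ∃ s : FreeMagma Unit, IsGood s ∧
      (evalWord (fun _ => wf) s = wg ∨ evalWord (fun _ => wg) s = wf)

/-- An elementary automorphism: it fixes all generators but one, which is sent to
`α x_i + f` with `α ≠ 0` and `f` in the subalgebra generated by the other generators. -/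
def IsElementary {k : Type*} [Field k] {n : ℕ} {A : Type*} [NonUnitalNonAssocRing A]
    [Module k A] [SMulCommClass k A A] [IsScalarTower k A A]
    (D : FreeRSData k n A) (e : A →ₙₐ[k] A) : Prop :=
  Function.Bijective e ∧ ∃ i : Fin n,
    (∀ j : Fin n, j ≠ i → e (D.x j) = D.x j) ∧
    ∃ (α : k) (f : A), α ≠ 0 ∧
      f ∈ NonUnitalAlgebra.adjoin k (D.x '' {j | j ≠ i}) ∧
      e (D.x i) = α • D.x i + f


set_option linter.unusedSectionVars false

section Order

variable {X : Type*} [LinearOrder X]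

lemma deg_pos (u : FreeMagma X) : 0 < deg u := by
  induction u using FreeMagma.rec with
  | of a => simp [deg]
  | mul u v ihu ihv => simp only [deg]; omega

lemma wlt_of_deg_lt {u v : FreeMagma X} (h : deg u < deg v) : wlt u v := by
  cases u with
  | of a =>
    cases v with
    | of b => simp [deg] at h
    | mul v₁ v₂ => trivial
  | mul u₁ u₂ =>
    cases v with
    | of b => have := deg_pos u₁; have := deg_pos u₂; simp [deg] at h ⊢; omega
    | mul v₁ v₂ => exact Or.inl h

lemma deg_le_of_wlt {u v : FreeMagma X} (h : wlt u v) : deg u ≤ deg v := by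
  cases u with
  | of a =>
    cases v with
    | of b => simp [deg]
    | mul v₁ v₂ => have := deg_pos v₁; have := deg_pos v₂; simp [deg]; omega
  | mul u₁ u₂ =>
    cases v with
    | of b => exact absurd h (by simp [wlt])
    | mul v₁ v₂ => rcases h with h | ⟨h, _⟩ <;> omega

lemma wlt_irrefl (u : FreeMagma X) : ¬ wlt u u := by
  induction u using FreeMagma.rec with
  | of a => simp [wlt]
  | mul u₁ u₂ ih₁ ih₂ =>
    rintro (h | ⟨-, h | ⟨-, h⟩⟩)
    · omega
    · exact ih₁ h
    · exact ih₂ h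

lemma wlt_trans {u v w : FreeMagma X} (huv : wlt u v) (hvw : wlt v w) : wlt u w := by
  induction u using FreeMagma.rec generalizing v w with
  | of a =>
    cases v with
    | of b =>
      cases w with
      | of c => exact lt_trans huv hvw
      | mul w₁ w₂ => trivial
    | mul v₁ v₂ =>
      cases w with
      | of c => exact absurd hvw (by simp [wlt])
      | mul w₁ w₂ => trivial
  | mul u₁ u₂ ih₁ ih₂ =>
    cases v with
    | of b => exact absurd huv (by simp [wlt])
    | mul v₁ v₂ =>
      cases w with
      | of c => exact absurd hvw (by simp [wlt])
      | mul w₁ w₂ =>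
        rcases huv with h | ⟨hd, hl⟩
        · rcases hvw with h' | ⟨hd', _⟩
          · exact Or.inl (lt_trans h h')
          · exact Or.inl (hd' ▸ h)
        · rcases hvw with h' | ⟨hd', hl'⟩
          · exact Or.inl (hd ▸ h')
          · refine Or.inr ⟨hd.trans hd', ?_⟩
            rcases hl with h | ⟨he, h⟩
            · rcases hl' with h' | ⟨he', h'⟩
              · exact Or.inl (ih₁ h h')
              · exact Or.inl (he' ▸ h)
            · rcases hl' with h' | ⟨he', h'⟩
              · exact Or.inl (he ▸ h')
              · exact Or.inr ⟨he.trans he', ih₂ h h'⟩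

lemma wlt_total (u v : FreeMagma X) : wlt u v ∨ u = v ∨ wlt v u := by
  induction u using FreeMagma.rec generalizing v with
  | of a =>
    cases v with
    | of b =>
      rcases lt_trichotomy a b with h | h | h
      · exact Or.inl h
      · exact Or.inr (Or.inl (by rw [h]))
      · exact Or.inr (Or.inr h)
    | mul v₁ v₂ => exact Or.inl trivial
  | mul u₁ u₂ ih₁ ih₂ =>
    cases v with
    | of b => exact Or.inr (Or.inr trivial)
    | mul v₁ v₂ =>
      rcases lt_trichotomy (deg (FreeMagma.mul u₁ u₂)) (deg (FreeMagma.mul v₁ v₂)) with hd | hd | hd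
      · exact Or.inl (Or.inl hd)
      · rcases ih₁ v₁ with h | h | h
        · exact Or.inl (Or.inr ⟨hd, Or.inl h⟩)
        · rcases ih₂ v₂ with h' | h' | h'
          · exact Or.inl (Or.inr ⟨hd, Or.inr ⟨h, h'⟩⟩)
          · exact Or.inr (Or.inl (by rw [h, h']))
          · exact Or.inr (Or.inr (Or.inr ⟨hd.symm, Or.inr ⟨h.symm, h'⟩⟩))
        · exact Or.inr (Or.inr (Or.inr ⟨hd.symm, Or.inl h⟩))
      · exact Or.inr (Or.inr (Or.inl hd))

lemma wlt_asymm {u v : FreeMagma X} (h : wlt u v) : ¬ wlt v u :=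
  fun h' => wlt_irrefl u (wlt_trans h h')

lemma wle_refl (u : FreeMagma X) : wle u u := Or.inr rfl

lemma wle_of_not_wlt {u v : FreeMagma X} (h : ¬ wlt u v) : wle v u := by
  rcases wlt_total v u with h' | h' | h'
  · exact Or.inl h'
  · exact Or.inr h'
  · exact absurd h' h

lemma not_wlt_of_wle {u v : FreeMagma X} (h : wle u v) : ¬ wlt v u := by
  rcases h with h | rfl
  · exact wlt_asymm h
  · exact wlt_irrefl u

lemma wle_trans {u v w : FreeMagma X} (h : wle u v) (h' : wle v w) : wle u w := by
  rcases h with h | rfl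
  · rcases h' with h' | rfl
    · exact Or.inl (wlt_trans h h')
    · exact Or.inl h
  · exact h'

lemma wle_trans_wlt {u v w : FreeMagma X} (h : wle u v) (h' : wlt v w) : wlt u w := by
  rcases h with h | rfl
  · exact wlt_trans h h'
  · exact h'

lemma wlt_trans_wle {u v w : FreeMagma X} (h : wlt u v) (h' : wle v w) : wlt u w := by
  rcases h' with h' | rfl
  · exact wlt_trans h h'
  · exact h

lemma deg_le_of_wle {u v : FreeMagma X} (h : wle u v) : deg u ≤ deg v := by
  rcases h with h | rfl
  · exact deg_le_of_wlt h
  · exact le_rfl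

lemma wlt_mul_of_wlt_left {u₁ u₂ v₁ v₂ : FreeMagma X} (h : wlt u₁ v₁) (h₂ : deg u₂ ≤ deg v₂) :
    wlt (FreeMagma.mul u₁ u₂) (FreeMagma.mul v₁ v₂) := by
  have hd := deg_le_of_wlt h
  rcases lt_or_eq_of_le (show deg (FreeMagma.mul u₁ u₂) ≤ deg (FreeMagma.mul v₁ v₂) by
    simp only [deg]; omega) with hlt | heq
  · exact Or.inl hlt
  · exact Or.inr ⟨heq, Or.inl h⟩

lemma wlt_mul_of_wlt_right {u₁ u₂ v₂ : FreeMagma X} (h : wlt u₂ v₂) :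
    wlt (FreeMagma.mul u₁ u₂) (FreeMagma.mul u₁ v₂) := by
  have hd := deg_le_of_wlt h
  rcases lt_or_eq_of_le (show deg (FreeMagma.mul u₁ u₂) ≤ deg (FreeMagma.mul u₁ v₂) by
    simp only [deg]; omega) with hlt | heq
  · exact Or.inl hlt
  · exact Or.inr ⟨heq, Or.inr ⟨rfl, h⟩⟩

lemma wle_mul {u₁ u₂ v₁ v₂ : FreeMagma X} (h₁ : wle u₁ v₁) (h₂ : wle u₂ v₂) :
    wle (FreeMagma.mul u₁ u₂) (FreeMagma.mul v₁ v₂) := by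
  rcases h₁ with h₁ | rfl
  · exact Or.inl (wlt_mul_of_wlt_left h₁ (deg_le_of_wle h₂))
  · rcases h₂ with h₂ | rfl
    · exact Or.inl (wlt_mul_of_wlt_right h₂)
    · exact Or.inr rfl

lemma wlt_mul_left {u₁ u₂ v₁ v₂ : FreeMagma X} (h₁ : wlt u₁ v₁) (h₂ : wle u₂ v₂) :
    wlt (FreeMagma.mul u₁ u₂) (FreeMagma.mul v₁ v₂) :=
  wlt_mul_of_wlt_left h₁ (deg_le_of_wle h₂)

lemma wlt_mul_right {u₁ u₂ v₁ v₂ : FreeMagma X} (h₁ : wle u₁ v₁) (h₂ : wlt u₂ v₂) :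
    wlt (FreeMagma.mul u₁ u₂) (FreeMagma.mul v₁ v₂) := by
  rcases h₁ with h₁ | rfl
  · exact wlt_mul_of_wlt_left h₁ (deg_le_of_wlt h₂)
  · exact wlt_mul_of_wlt_right h₂

end Order
section WF

variable {X : Type*} [LinearOrder X]

lemma finite_deg_le [Finite X] (d : ℕ) : {v : FreeMagma X | deg v ≤ d}.Finite := by
  induction d with
  | zero =>
    convert Set.finite_empty
    ext v
    simpa using (deg_pos v).ne'
  | succ d ih =>
    have h : {v : FreeMagma X | deg v ≤ d + 1} ⊆
        Set.range FreeMagma.of ∪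
          Set.image2 FreeMagma.mul {v : FreeMagma X | deg v ≤ d} {v : FreeMagma X | deg v ≤ d} := by
      intro v hv
      cases v with
      | of a => exact Or.inl ⟨a, rfl⟩
      | mul v₁ v₂ =>
        have h₁ := deg_pos v₁
        have h₂ := deg_pos v₂
        simp only [Set.mem_setOf_eq, deg] at hv
        exact Or.inr ⟨v₁, by simp only [Set.mem_setOf_eq]; omega, v₂,
          by simp only [Set.mem_setOf_eq]; omega, rfl⟩
    exact Set.Finite.subset ((Set.finite_range _).union (Set.Finite.image2 _ ih ih)) h

lemma wf_of_finite_preds {α : Type*} {r : α → α → Prop}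
    (htr : ∀ a b c, r a b → r b c → r a c) (hirr : ∀ a, ¬ r a a)
    (hfin : ∀ a, {b | r b a}.Finite) : WellFounded r := by
  have key : ∀ m (a : α), (hfin a).toFinset.card ≤ m → Acc r a := by
    intro m
    induction m with
    | zero =>
      intro a ha
      constructor
      intro b hb
      exact absurd (Finset.card_eq_zero.mp (Nat.le_zero.mp ha) ▸ (hfin a).mem_toFinset.mpr hb)
        (Finset.notMem_empty b)
    | succ m ih =>
      intro a ha
      constructor
      intro b hb
      apply ih
      have hss : (hfin b).toFinset ⊂ (hfin a).toFinset := by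
        constructor
        · intro c hc
          exact (hfin a).mem_toFinset.mpr (htr _ _ _ ((hfin b).mem_toFinset.mp hc) hb)
        · intro hsub
          exact hirr b ((hfin b).mem_toFinset.mp (hsub ((hfin a).mem_toFinset.mpr hb)))
      have := Finset.card_lt_card hss
      omega
  exact ⟨fun a => key _ a le_rfl⟩

lemma wlt_wf [Finite X] : WellFounded (wlt : FreeMagma X → FreeMagma X → Prop) := by
  exact wf_of_finite_preds (r := wlt) (fun _ _ _ h h' => wlt_trans h h') wlt_irrefl
    (fun a => (finite_deg_le (deg a)).subset fun b hb => deg_le_of_wlt hb)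

end WF
section Subst

variable {X : Type*} [LinearOrder X]

lemma mulE (u v : FreeMagma X) : u * v = FreeMagma.mul u v := rfl

lemma isGood_mul_left {u v : FreeMagma X} (h : IsGood (FreeMagma.mul u v)) : IsGood u := by
  cases u with
  | of a => trivial
  | mul u₁ u₂ => exact h.1

lemma isGood_mul_right {u v : FreeMagma X} (h : IsGood (FreeMagma.mul u v)) : IsGood v := by
  cases u with
  | of a => exact h
  | mul u₁ u₂ => exact h.2.1

lemma isGood_mul {u v : FreeMagma X} (hu : IsGood u) (hv : IsGood v)
    (h : ∀ u₁ u₂, u = FreeMagma.mul u₁ u₂ → ¬ wlt v u₂) : IsGood (FreeMagma.mul u v) := by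
  cases u with
  | of a => exact hv
  | mul u₁ u₂ => exact ⟨hu, hv, h u₁ u₂ rfl⟩

lemma not_wlt_of_isGood_mul {u₁ u₂ v : FreeMagma X}
    (h : IsGood (FreeMagma.mul (FreeMagma.mul u₁ u₂) v)) : ¬ wlt v u₂ := h.2.2

/-- Substitution of a word for the variable of a one-variable word. -/
def subst (w : FreeMagma X) : FreeMagma (Fin 1) → FreeMagma X
  | .of _ => w
  | .mul s t => FreeMagma.mul (subst w s) (subst w t)

@[simp] lemma subst_of (w : FreeMagma X) (a : Fin 1) : subst w (.of a) = w := rfl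

@[simp] lemma subst_mul (w : FreeMagma X) (s t : FreeMagma (Fin 1)) :
    subst w (FreeMagma.mul s t) = FreeMagma.mul (subst w s) (subst w t) := rfl

lemma subst_eq_eval (w : FreeMagma X) (s : FreeMagma (Fin 1)) :
    subst w s = evalWord (fun _ => w) s := by
  induction s using FreeMagma.rec with
  | of a => rfl
  | mul s₁ s₂ ih₁ ih₂ => rw [subst_mul]; show _ = evalWord _ s₁ * evalWord _ s₂
                         rw [← ih₁, ← ih₂]; rfl

lemma deg_subst (w : FreeMagma X) (s : FreeMagma (Fin 1)) :
    deg (subst w s) = deg s * deg w := by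
  induction s using FreeMagma.rec with
  | of a => simp [deg]
  | mul s₁ s₂ ih₁ ih₂ => simp only [subst_mul, deg, ih₁, ih₂]; ring

lemma subst_wlt_mono (w : FreeMagma X) {s t : FreeMagma (Fin 1)} (h : wlt s t) :
    wlt (subst w s) (subst w t) := by
  induction s using FreeMagma.rec generalizing t with
  | of a =>
    cases t with
    | of b =>
      have hab : a = b := Subsingleton.elim a b
      subst hab
      exact absurd h (wlt_irrefl _)
    | mul t₁ t₂ =>
      apply wlt_of_deg_lt
      rw [deg_subst, deg_subst]
      have hw := deg_pos w
      have : deg (FreeMagma.of a) < deg (FreeMagma.mul t₁ t₂) := by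
        have := deg_pos t₁; have := deg_pos t₂; simp only [deg]; omega
      exact Nat.mul_lt_mul_of_lt_of_le this le_rfl hw
  | mul s₁ s₂ ih₁ ih₂ =>
    cases t with
    | of b => exact absurd h (by simp [wlt])
    | mul t₁ t₂ =>
      rcases h with h | ⟨hd, h | ⟨rfl, h⟩⟩
      · apply wlt_of_deg_lt
        rw [deg_subst, deg_subst]
        exact Nat.mul_lt_mul_of_lt_of_le h le_rfl (deg_pos w)
      · have hds : deg (subst w (FreeMagma.mul s₁ s₂)) = deg (subst w (FreeMagma.mul t₁ t₂)) := by
          rw [deg_subst, deg_subst, hd]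
        simp only [subst_mul] at hds ⊢
        exact Or.inr ⟨hds, Or.inl (ih₁ h)⟩
      · simp only [subst_mul]
        exact wlt_mul_of_wlt_right (ih₂ h)

lemma subst_wle_mono (w : FreeMagma X) {s t : FreeMagma (Fin 1)} (h : wle s t) :
    wle (subst w s) (subst w t) := by
  rcases h with h | rfl
  · exact Or.inl (subst_wlt_mono w h)
  · exact Or.inr rfl

lemma subst_injective (w : FreeMagma X) : Function.Injective (subst w) := by
  intro s t h
  rcases wlt_total s t with h' | h' | h'
  · exact absurd (h ▸ subst_wlt_mono w h') (wlt_irrefl _)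
  · exact h'
  · exact absurd (h ▸ subst_wlt_mono w h') (wlt_irrefl _)

lemma subst_good {w : FreeMagma X} {s : FreeMagma (Fin 1)} (hw : IsGood w) (hs : IsGood s) :
    IsGood (subst w s) := by
  induction s using FreeMagma.rec with
  | of a => exact hw
  | mul s₁ s₂ ih₁ ih₂ =>
    have hs₁ : IsGood s₁ := isGood_mul_left hs
    have hs₂ : IsGood s₂ := isGood_mul_right hs
    rw [subst_mul]
    refine isGood_mul (ih₁ hs₁) (ih₂ hs₂) ?_
    intro a b hab
    cases s₁ with
    | of c =>
      rw [subst_of] at hab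
      apply wlt_asymm
      apply wlt_of_deg_lt
      have hb : deg b < deg w := by
        rw [hab]; have := deg_pos a; simp only [deg]; omega
      have hws : deg w ≤ deg (subst w s₂) := by
        rw [deg_subst]; have := deg_pos s₂; nlinarith [deg_pos w]
      omega
    | mul t₁ t₂ =>
      rw [subst_mul] at hab
      injection hab with h1 h2
      subst h1; subst h2
      have hn := not_wlt_of_isGood_mul hs
      exact not_wlt_of_wle (subst_wle_mono w (wle_of_not_wlt hn))

end Subst
section Alg

variable {k : Type*} [Field k] {n : ℕ} {A : Type*} [NonUnitalNonAssocRing A] [Module k A]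
  [SMulCommClass k A A] [IsScalarTower k A A] (D : FreeRSData k n A)

/-- The span of the good basis words `≤ X`. -/
def SpanLe (X : FreeMagma (Fin n)) : Submodule k A :=
  Submodule.span k (D.basis '' {p : {w : FreeMagma (Fin n) // IsGood w} | wle p.1 X})

/-- The span of the good basis words `< X`. -/
def SpanLt (X : FreeMagma (Fin n)) : Submodule k A :=
  Submodule.span k (D.basis '' {p : {w : FreeMagma (Fin n) // IsGood w} | wlt p.1 X})

lemma basis_mem_spanLe {X : FreeMagma (Fin n)} {p : {w : FreeMagma (Fin n) // IsGood w}}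
    (h : wle p.1 X) : D.basis p ∈ SpanLe D X :=
  Submodule.subset_span ⟨p, h, rfl⟩

lemma spanLe_mono {X Y : FreeMagma (Fin n)} (h : wle X Y) : SpanLe D X ≤ SpanLe D Y :=
  Submodule.span_mono (Set.image_mono fun p hp => wle_trans hp h)

lemma spanLt_le_spanLe {X : FreeMagma (Fin n)} : SpanLt D X ≤ SpanLe D X :=
  Submodule.span_mono (Set.image_mono fun p hp => Or.inl hp)

lemma spanLe_le_spanLt {X Y : FreeMagma (Fin n)} (h : wlt X Y) : SpanLe D X ≤ SpanLt D Y :=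
  Submodule.span_mono (Set.image_mono fun p hp => wle_trans_wlt hp h)

lemma spanLt_mono {X Y : FreeMagma (Fin n)} (h : wle X Y) : SpanLt D X ≤ SpanLt D Y :=
  Submodule.span_mono (Set.image_mono fun p hp => wlt_trans_wle hp h)

lemma mem_spanLe_iff {X : FreeMagma (Fin n)} {f : A} :
    f ∈ SpanLe D X ↔ ∀ p ∈ (D.basis.repr f).support, wle p.1 X := by
  rw [SpanLe, Module.Basis.mem_span_image]
  constructor
  · intro h p hp; exact h hp
  · intro h p hp; exact h p hp

lemma mem_spanLt_iff {X : FreeMagma (Fin n)} {f : A} :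
    f ∈ SpanLt D X ↔ ∀ p ∈ (D.basis.repr f).support, wlt p.1 X := by
  rw [SpanLt, Module.Basis.mem_span_image]
  constructor
  · intro h p hp; exact h hp
  · intro h p hp; exact h p hp

lemma repr_eq_zero_of_mem_spanLt {X : FreeMagma (Fin n)} (hX : IsGood X) {f : A}
    (hf : f ∈ SpanLt D X) : D.basis.repr f ⟨X, hX⟩ = 0 := by
  by_contra h
  exact wlt_irrefl X (mem_spanLt_iff D |>.mp hf ⟨X, hX⟩ (Finsupp.mem_support_iff.mpr h))

lemma eval_good_eq_basis {X : FreeMagma (Fin n)} (hX : IsGood X) :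
    evalWord D.x X = D.basis ⟨X, hX⟩ := (D.basis_eq ⟨X, hX⟩).symm

lemma sub_repr_smul_mem_spanLt {X : FreeMagma (Fin n)} (hX : IsGood X) {f : A}
    (hf : f ∈ SpanLe D X) :
    f - D.basis.repr f ⟨X, hX⟩ • D.basis ⟨X, hX⟩ ∈ SpanLt D X := by
  rw [mem_spanLt_iff]
  intro p hp
  rw [Finsupp.mem_support_iff] at hp
  rw [map_sub, map_smul, D.basis.repr_self, Finsupp.sub_apply, Finsupp.smul_apply] at hp
  by_cases hpX : p = ⟨X, hX⟩
  · subst hpX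
    rw [Finsupp.single_eq_same] at hp
    simp at hp
  · rw [Finsupp.single_eq_of_ne hpX, smul_zero, sub_zero] at hp
    have := mem_spanLe_iff D |>.mp hf p (Finsupp.mem_support_iff.mpr hp)
    rcases this with h | h
    · exact h
    · exact absurd (Subtype.ext h) hpX

lemma span_mul_span_mem {s t : Set A} {S : Submodule k A}
    (H : ∀ a ∈ s, ∀ b ∈ t, a * b ∈ S) {f g : A}
    (hf : f ∈ Submodule.span k s) (hg : g ∈ Submodule.span k t) : f * g ∈ S := by
  induction hf using Submodule.span_induction with
  | mem a ha =>
    induction hg using Submodule.span_induction with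
    | mem b hb => exact H a ha b hb
    | zero => rw [mul_zero]; exact S.zero_mem
    | add x y _ _ hx hy => rw [mul_add]; exact S.add_mem hx hy
    | smul c x _ hx => rw [mul_smul_comm]; exact S.smul_mem c hx
  | zero => rw [zero_mul]; exact S.zero_mem
  | add x y _ _ hx hy => rw [add_mul]; exact S.add_mem hx hy
  | smul c x _ hx => rw [smul_mul_assoc]; exact S.smul_mem c hx

lemma eval_mul (t₁ t₂ : FreeMagma (Fin n)) :
    evalWord D.x (FreeMagma.mul t₁ t₂) = evalWord D.x t₁ * evalWord D.x t₂ := rfl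

/-- **Reduction lemma**: the value of any word lies in the span of the good words `≤` it. -/
theorem eval_mem_spanLe (t : FreeMagma (Fin n)) : evalWord D.x t ∈ SpanLe D t := by
  induction t using (wlt_wf (X := Fin n)).induction with
  | _ t IH =>
  by_cases hgood : IsGood t
  · rw [eval_good_eq_basis D hgood]
    exact basis_mem_spanLe D (wle_refl t)
  cases t with
  | of a => exact absurd trivial hgood
  | mul t₁ t₂ =>
    have hd₁ : wlt t₁ (FreeMagma.mul t₁ t₂) :=
      wlt_of_deg_lt (by have := deg_pos t₂; simp only [deg]; omega)
    have hd₂ : wlt t₂ (FreeMagma.mul t₁ t₂) :=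
      wlt_of_deg_lt (by have := deg_pos t₁; simp only [deg]; omega)
    by_cases h12 : IsGood t₁ ∧ IsGood t₂
    · obtain ⟨h1, h2⟩ := h12
      cases t₁ with
      | of a => exact absurd h2 hgood
      | mul u₁ u₂ =>
        have hbad : wlt t₂ u₂ := by
          by_contra hnb
          exact hgood ⟨h1, h2, hnb⟩
        set a := evalWord D.x u₁
        set b := evalWord D.x u₂
        set c := evalWord D.x t₂
        have hre : evalWord D.x (FreeMagma.mul (FreeMagma.mul u₁ u₂) t₂)
            = evalWord D.x (FreeMagma.mul u₁ (FreeMagma.mul u₂ t₂))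
              + (evalWord D.x (FreeMagma.mul (FreeMagma.mul u₁ t₂) u₂)
                - evalWord D.x (FreeMagma.mul u₁ (FreeMagma.mul t₂ u₂))) := by
          have h := D.rightSymm a b c
          show (a * b) * c = a * (b * c) + ((a * c) * b - a * (c * b))
          calc (a * b) * c = ((a * b) * c - a * (b * c)) + a * (b * c) := by abel
            _ = ((a * c) * b - a * (c * b)) + a * (b * c) := by rw [h]
            _ = a * (b * c) + ((a * c) * b - a * (c * b)) := by abel
        have hw1 : wlt (FreeMagma.mul u₁ (FreeMagma.mul u₂ t₂))
            (FreeMagma.mul (FreeMagma.mul u₁ u₂) t₂) := by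
          refine Or.inr ⟨by simp only [deg]; omega, Or.inl ?_⟩
          exact wlt_of_deg_lt (by have := deg_pos u₂; simp only [deg]; omega)
        have hw2 : wlt (FreeMagma.mul (FreeMagma.mul u₁ t₂) u₂)
            (FreeMagma.mul (FreeMagma.mul u₁ u₂) t₂) := by
          refine Or.inr ⟨by simp only [deg]; omega, Or.inl ?_⟩
          exact wlt_mul_of_wlt_right hbad
        have hw3 : wlt (FreeMagma.mul u₁ (FreeMagma.mul t₂ u₂))
            (FreeMagma.mul (FreeMagma.mul u₁ u₂) t₂) := by
          refine Or.inr ⟨by simp only [deg]; omega, Or.inl ?_⟩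
          exact wlt_of_deg_lt (by have := deg_pos u₂; simp only [deg]; omega)
        rw [hre]
        refine Submodule.add_mem _ ?_ (Submodule.sub_mem _ ?_ ?_)
        · exact spanLe_mono D (Or.inl hw1) (IH _ hw1)
        · exact spanLe_mono D (Or.inl hw2) (IH _ hw2)
        · exact spanLe_mono D (Or.inl hw3) (IH _ hw3)
    · rw [eval_mul]
      refine span_mul_span_mem (s := D.basis '' {p | wle p.1 t₁})
        (t := D.basis '' {p | wle p.1 t₂}) ?_ (IH t₁ hd₁) (IH t₂ hd₂)
      rintro x ⟨p, hp, rfl⟩ y ⟨q, hq, rfl⟩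
      have hpq : wlt (FreeMagma.mul p.1 q.1) (FreeMagma.mul t₁ t₂) := by
        rcases not_and_or.mp h12 with hb1 | hb2
        · have hps : wlt p.1 t₁ := by
            rcases hp with h | h
            · exact h
            · exact absurd (h ▸ p.2) hb1
          exact wlt_mul_left hps hq
        · have hqs : wlt q.1 t₂ := by
            rcases hq with h | h
            · exact h
            · exact absurd (h ▸ q.2) hb2
          exact wlt_mul_right hp hqs
      have : D.basis p * D.basis q = evalWord D.x (FreeMagma.mul p.1 q.1) := by
        rw [D.basis_eq p, D.basis_eq q]; rfl
      rw [this]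
      exact spanLe_mono D (Or.inl hpq) (IH _ hpq)

end Alg
section Alg2

variable {k : Type*} [Field k] {n : ℕ} {A : Type*} [NonUnitalNonAssocRing A] [Module k A]
  [SMulCommClass k A A] [IsScalarTower k A A] (D : FreeRSData k n A)

lemma basis_mul_basis (p q : {w : FreeMagma (Fin n) // IsGood w}) :
    D.basis p * D.basis q = evalWord D.x (FreeMagma.mul p.1 q.1) := by
  rw [D.basis_eq p, D.basis_eq q]; rfl

lemma mul_mem_spanLe {X Y : FreeMagma (Fin n)} {f g : A}
    (hf : f ∈ SpanLe D X) (hg : g ∈ SpanLe D Y) : f * g ∈ SpanLe D (FreeMagma.mul X Y) := by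
  refine span_mul_span_mem ?_ hf hg
  rintro a ⟨p, hp, rfl⟩ b ⟨q, hq, rfl⟩
  rw [basis_mul_basis]
  exact spanLe_mono D (wle_mul hp hq) (eval_mem_spanLe D _)

lemma mul_mem_spanLt_left {X Y : FreeMagma (Fin n)} {f g : A}
    (hf : f ∈ SpanLt D X) (hg : g ∈ SpanLe D Y) : f * g ∈ SpanLt D (FreeMagma.mul X Y) := by
  refine span_mul_span_mem ?_ hf hg
  rintro a ⟨p, hp, rfl⟩ b ⟨q, hq, rfl⟩
  rw [basis_mul_basis]
  exact spanLe_le_spanLt D (wlt_mul_left hp hq) (eval_mem_spanLe D _)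

lemma mul_mem_spanLt_right {X Y : FreeMagma (Fin n)} {f g : A}
    (hf : f ∈ SpanLe D X) (hg : g ∈ SpanLt D Y) : f * g ∈ SpanLt D (FreeMagma.mul X Y) := by
  refine span_mul_span_mem ?_ hf hg
  rintro a ⟨p, hp, rfl⟩ b ⟨q, hq, rfl⟩
  rw [basis_mul_basis]
  exact spanLe_le_spanLt D (wlt_mul_right hp hq) (eval_mem_spanLe D _)

lemma repr_mul {X Y : FreeMagma (Fin n)} (hX : IsGood X) (hY : IsGood Y)
    (hXY : IsGood (FreeMagma.mul X Y)) {f g : A}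
    (hf : f ∈ SpanLe D X) (hg : g ∈ SpanLe D Y) :
    D.basis.repr (f * g) ⟨FreeMagma.mul X Y, hXY⟩
      = D.basis.repr f ⟨X, hX⟩ * D.basis.repr g ⟨Y, hY⟩ := by
  set c := D.basis.repr f ⟨X, hX⟩ with hc
  set e := D.basis.repr g ⟨Y, hY⟩ with he
  set bX := D.basis ⟨X, hX⟩ with hbX
  set bY := D.basis ⟨Y, hY⟩ with hbY
  have hf'm : f - c • bX ∈ SpanLt D X := sub_repr_smul_mem_spanLt D hX hf
  have hg'm : g - e • bY ∈ SpanLt D Y := sub_repr_smul_mem_spanLt D hY hg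
  have hbXm : bX ∈ SpanLe D X := basis_mem_spanLe D (wle_refl X)
  have hfg : f * g = (f - c • bX) * g + ((c • bX) * (g - e • bY) + (c * e) • (bX * bY)) := by
    have h1 : (c • bX) * (g - e • bY) = (c • bX) * g - (c • bX) * (e • bY) := by
      rw [mul_sub]
    have h2 : (c • bX) * (e • bY) = (c * e) • (bX * bY) := by
      rw [smul_mul_assoc, mul_smul_comm, smul_smul]
    rw [h1, h2, sub_mul]
    abel
  have hz1 : D.basis.repr ((f - c • bX) * g) ⟨FreeMagma.mul X Y, hXY⟩ = 0 :=
    repr_eq_zero_of_mem_spanLt D hXY (mul_mem_spanLt_left D hf'm hg)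
  have hz2 : D.basis.repr ((c • bX) * (g - e • bY)) ⟨FreeMagma.mul X Y, hXY⟩ = 0 :=
    repr_eq_zero_of_mem_spanLt D hXY
      (mul_mem_spanLt_right D (Submodule.smul_mem _ c hbXm) hg'm)
  have hb : bX * bY = D.basis ⟨FreeMagma.mul X Y, hXY⟩ := by
    rw [hbX, hbY, basis_mul_basis]
    exact (eval_good_eq_basis D hXY)
  rw [hfg, map_add, map_add, Finsupp.add_apply, Finsupp.add_apply, hz1, hz2, zero_add, zero_add,
    map_smul, Finsupp.smul_apply, hb, D.basis.repr_self, Finsupp.single_eq_same]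
  simp

lemma exists_leading {m : ℕ} {B : Type*} [NonUnitalNonAssocRing B] [Module k B]
    (E : FreeRSData k m B) (f : B) (hf : f ≠ 0) :
    ∃ p ∈ (E.basis.repr f).support, ∀ q ∈ (E.basis.repr f).support, q ≠ p → wlt q.1 p.1 := by
  have hne : (E.basis.repr f).support.Nonempty := by
    rw [Finsupp.support_nonempty_iff]
    simpa using hf
  have : ∀ (s : Finset {w : FreeMagma (Fin m) // IsGood w}) (_ : s.Nonempty),
      ∃ p ∈ s, ∀ q ∈ s, q ≠ p → wlt q.1 p.1 := by
    intro s hs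
    induction hs using Finset.Nonempty.cons_induction with
    | singleton a => exact ⟨a, Finset.mem_singleton_self a, fun q hq hne =>
        absurd (Finset.mem_singleton.mp hq) hne⟩
    | cons a s ha hs ih =>
      obtain ⟨p, hp, hmax⟩ := ih
      rcases wlt_total a.1 p.1 with h | h | h
      · refine ⟨p, Finset.mem_cons.mpr (Or.inr hp), ?_⟩
        intro q hq hqp
        rcases Finset.mem_cons.mp hq with rfl | hq
        · exact h
        · exact hmax q hq hqp
      · exact absurd (Subtype.ext h ▸ hp) ha
      · refine ⟨a, Finset.mem_cons_self a s, ?_⟩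
        intro q hq hqa
        rcases Finset.mem_cons.mp hq with rfl | hq
        · exact absurd rfl hqa
        · by_cases hqp : q = p
          · exact hqp ▸ h
          · exact wlt_trans (hmax q hq hqp) h
  exact this _ hne

end Alg2
section Fin

variable {k : Type*} [Field k] {n : ℕ} {A : Type*} [NonUnitalNonAssocRing A] [Module k A]
  [SMulCommClass k A A] [IsScalarTower k A A] (D : FreeRSData k n A)

lemma key_pow (z : A) {w : FreeMagma (Fin n)} (hw : IsGood w) (hzle : z ∈ SpanLe D w)
    (s : FreeMagma (Fin 1)) :
    ∀ _ : IsGood s,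
      evalWord (fun _ : Fin 1 => z) s ∈ SpanLe D (subst w s) ∧
      ∀ h' : IsGood (subst w s),
        D.basis.repr (evalWord (fun _ : Fin 1 => z) s) ⟨subst w s, h'⟩
          = (D.basis.repr z ⟨w, hw⟩) ^ deg s := by
  induction s using FreeMagma.rec with
  | of a =>
    intro _
    refine ⟨hzle, ?_⟩
    intro h'
    show D.basis.repr z ⟨w, hw⟩ = D.basis.repr z ⟨w, hw⟩ ^ deg (FreeMagma.of a)
    rw [show deg (FreeMagma.of a) = 1 from rfl, pow_one]
  | mul s₁ s₂ ih₁ ih₂ =>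
    intro hs
    have hs₁ : IsGood s₁ := isGood_mul_left hs
    have hs₂ : IsGood s₂ := isGood_mul_right hs
    obtain ⟨hm₁, hc₁⟩ := ih₁ hs₁
    obtain ⟨hm₂, hc₂⟩ := ih₂ hs₂
    have hg₁ : IsGood (subst w s₁) := subst_good hw hs₁
    have hg₂ : IsGood (subst w s₂) := subst_good hw hs₂
    constructor
    · show evalWord (fun _ : Fin 1 => z) s₁ * evalWord (fun _ : Fin 1 => z) s₂
        ∈ SpanLe D (FreeMagma.mul (subst w s₁) (subst w s₂))
      exact mul_mem_spanLe D hm₁ hm₂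
    · intro h'
      have h'' : IsGood (FreeMagma.mul (subst w s₁) (subst w s₂)) := h'
      show D.basis.repr (evalWord (fun _ : Fin 1 => z) s₁ * evalWord (fun _ : Fin 1 => z) s₂)
          ⟨FreeMagma.mul (subst w s₁) (subst w s₂), h''⟩ = _
      rw [repr_mul D hg₁ hg₂ h'' hm₁ hm₂, hc₁ hg₁, hc₂ hg₂, ← pow_add]
      rfl

lemma map_evalWord {B : Type*} [NonUnitalNonAssocRing B] [Module k B]
    (ψ : B →ₙₐ[k] A) {m : ℕ} (x : Fin m → B) (t : FreeMagma (Fin m)) :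
    ψ (evalWord x t) = evalWord (fun i => ψ (x i)) t := by
  induction t using FreeMagma.rec with
  | of a => rfl
  | mul u v ihu ihv =>
    show ψ (evalWord x u * evalWord x v) = _
    rw [map_mul, ihu, ihv]
    rfl

theorem statement14' (k : Type*) [Field k] (n : ℕ) (A A₁ : Type*)
    [NonUnitalNonAssocRing A] [Module k A] [SMulCommClass k A A] [IsScalarTower k A A]
    [NonUnitalNonAssocRing A₁] [Module k A₁] [SMulCommClass k A₁ A₁] [IsScalarTower k A₁ A₁]
    (D : FreeRSData k n A) (D₁ : FreeRSData k 1 A₁)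
    (z : A) (hz : z ≠ 0)
    (φ : A₁ →ₙₐ[k] A) (hφ : φ (D₁.x 0) = z) :
    Function.Injective φ := by
  have key : ∀ y : A₁, y ≠ 0 → φ y ≠ 0 := by
    intro y hy
    obtain ⟨⟨w, hw⟩, hzmem, hzmax⟩ := exists_leading D z hz
    set d := D.basis.repr z ⟨w, hw⟩ with hd
    have hdne : d ≠ 0 := Finsupp.mem_support_iff.mp hzmem
    have hzle : z ∈ SpanLe D w := by
      rw [mem_spanLe_iff]
      intro p hp
      by_cases hpw : p = ⟨w, hw⟩
      · exact Or.inr (by rw [hpw])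
      · exact Or.inl (hzmax p hp hpw)
    obtain ⟨s₀, hs₀mem, hs₀max⟩ := exists_leading D₁ y hy
    have hy' : φ y = ∑ s ∈ (D₁.basis.repr y).support,
        (D₁.basis.repr y) s • evalWord (fun _ : Fin 1 => z) s.1 := by
      conv_lhs => rw [← D₁.basis.linearCombination_repr y]
      rw [Finsupp.linearCombination_apply, Finsupp.sum, map_sum]
      refine Finset.sum_congr rfl ?_
      intro s _
      have hx : (fun i => φ (D₁.x i)) = fun _ : Fin 1 => z := by
        funext i
        have hi : i = 0 := by omega
        rw [hi, hφ]
      rw [map_smul, D₁.basis_eq s, map_evalWord, hx]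
    have hT : IsGood (subst w s₀.1) := subst_good hw s₀.2
    have hco : D.basis.repr (φ y) ⟨subst w s₀.1, hT⟩
        = (D₁.basis.repr y) s₀ * d ^ deg s₀.1 := by
      rw [hy', map_sum, Finsupp.finset_sum_apply, Finset.sum_eq_single s₀]
      · rw [map_smul, Finsupp.smul_apply,
          (key_pow D z hw hzle s₀.1 s₀.2).2 hT, smul_eq_mul]
      · intro s hs hne
        rw [map_smul, Finsupp.smul_apply]
        have h1 : evalWord (fun _ : Fin 1 => z) s.1 ∈ SpanLt D (subst w s₀.1) :=
          spanLe_le_spanLt D (subst_wlt_mono w (hs₀max s hs hne))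
            ((key_pow D z hw hzle s.1 s.2).1)
        rw [repr_eq_zero_of_mem_spanLt D hT h1, smul_zero]
      · intro h
        exact absurd hs₀mem h
    intro h0
    have : (D₁.basis.repr y) s₀ * d ^ deg s₀.1 = 0 := by
      rw [← hco, h0, map_zero]
      rfl
    exact mul_ne_zero (Finsupp.mem_support_iff.mp hs₀mem) (pow_ne_zero _ hdne) this
  intro a b hab
  by_contra hne
  exact key (a - b) (sub_ne_zero.mpr hne) (by rw [map_sub, hab, sub_self])

end Fin

/-- Lemma 4.1: for any nonzero element `z` of the free right-symmetric
algebra `A`, the algebra homomorphism from the free right-symmetric algebra `RS⟨x⟩` on one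
generator sending `x` to `z` is injective, i.e. the subalgebra generated by `z` is isomorphic
to `RS⟨x⟩`. -/
theorem statement14 (k : Type*) [Field k] (n : ℕ) (A A₁ : Type*)
    [NonUnitalNonAssocRing A] [Module k A] [SMulCommClass k A A] [IsScalarTower k A A]
    [NonUnitalNonAssocRing A₁] [Module k A₁] [SMulCommClass k A₁ A₁] [IsScalarTower k A₁ A₁]
    (D : FreeRSData k n A) (D₁ : FreeRSData k 1 A₁)
    (z : A) (hz : z ≠ 0)
    (φ : A₁ →ₙₐ[k] A) (hφ : φ (D₁.x 0) = z) :
    Function.Injective φ := by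
  exact statement14' k n A A₁ D D₁ z hz φ hφ

end RS
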